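/- Let Ω ⊂ ℝⁿ be bounded open with |Ω| > 0, q > 1, and let f lie in weak-L^q(Ω), i.e. there is C ≥ 0 with |{x ∈ Ω : |f(x)| > t}| ≤ C/t^q for all t > 0. Then f belongs to the grand Lebesgue space L^{q)}(Ω). -/

import Mathlib

open MeasureTheory ENNReal

private lemma stmt4_dyadic (a : ℝ) (ha : 1 < a) :
    ∃ k : ℕ, (2:ℝ)^k < a ∧ a ≤ 2^(k+1) := by
  classical
  have hex : ∃ m : ℕ, a ≤ 2 ^ m := by
    obtain ⟨m, hm⟩ := pow_unbounded_of_one_lt a (by norm_num : (1:ℝ) < 2)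
    exact ⟨m, hm.le⟩
  have hms : a ≤ 2 ^ Nat.find hex := Nat.find_spec hex
  have hm1 : Nat.find hex ≠ 0 := by
    intro h
    rw [h] at hms; simp at hms; linarith
  refine ⟨Nat.find hex - 1, ?_, by rwa [Nat.sub_add_cancel (Nat.one_le_iff_ne_zero.2 hm1)]⟩
  have := Nat.find_min hex (Nat.pred_lt hm1)
  push_neg at this
  exact this

private lemma stmt4_real_ineq (q ε : ℝ) (hε : 0 < ε) (hεq : ε < q - 1) :
    ε * Real.log 2 ≤ (1 + q * Real.log 2) * (1 - (2:ℝ) ^ (-ε)) := by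
  have hl2 : 0 < Real.log 2 := Real.log_pos (by norm_num)
  set r : ℝ := (2:ℝ) ^ (-ε) with hr
  have hr0 : 0 < r := Real.rpow_pos_of_pos (by norm_num) _
  have hre : r = Real.exp (-(ε * Real.log 2)) := by
    rw [hr, Real.rpow_def_of_pos (by norm_num : (0:ℝ) < 2)]
    ring_nf
  have hmul : r * Real.exp (ε * Real.log 2) = 1 := by
    rw [hre, ← Real.exp_add]; simp
  have he : ε * Real.log 2 + 1 ≤ Real.exp (ε * Real.log 2) := Real.add_one_le_exp _
  have hr1 : r * (1 + ε * Real.log 2) ≤ 1 := by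
    calc r * (1 + ε * Real.log 2) ≤ r * Real.exp (ε * Real.log 2) :=
          by apply mul_le_mul_of_nonneg_left (by linarith) hr0.le
      _ = 1 := hmul
  have hrle : r ≤ 1 := by nlinarith [mul_pos hr0 (mul_pos hε hl2)]
  nlinarith [mul_le_mul_of_nonneg_left (sub_nonneg.2 hrle)
    (mul_nonneg (by linarith : (0:ℝ) ≤ q - ε) hl2.le)]

/-- If Ω ⊂ ℝⁿ is bounded open with |Ω| > 0, q > 1, and f is in
weak-L^q(Ω), i.e. |{x ∈ Ω : |f x| > t}| ≤ C/t^q for all t > 0, then f belongs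
to the grand Lebesgue space L^{q)}(Ω). -/
theorem stmt4 {n : ℕ} (Ω : Set (EuclideanSpace ℝ (Fin n)))
    (hΩo : IsOpen Ω) (hΩb : Bornology.IsBounded Ω)
    (hΩpos : 0 < volume Ω)
    (q : ℝ) (hq : 1 < q)
    (f : EuclideanSpace ℝ (Fin n) → ℝ)
    (C : ℝ) (hC : 0 ≤ C)
    (hweak : ∀ t : ℝ, 0 < t →
      (volume {x | x ∈ Ω ∧ t < |f x|}).toReal ≤ C / t ^ q) :
    ∃ M : ℝ≥0∞, M ≠ ⊤ ∧ ∀ ε : ℝ, 0 < ε → ε < q - 1 →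
      ((ENNReal.ofReal ε / volume Ω) *
        ∫⁻ x in Ω, ENNReal.ofReal |f x| ^ (q - ε)) ^ (1 / (q - ε)) ≤ M := by
  classical
  have hΩfin : volume Ω ≠ ⊤ := hΩb.measure_lt_top.ne
  set K : ℝ := C * 2 ^ q * ((1 + q * Real.log 2) / Real.log 2) with hKdef
  set B : ℝ≥0∞ := ENNReal.ofReal q * volume Ω + ENNReal.ofReal K with hBdef
  have hBfin : B ≠ ⊤ := by
    rw [hBdef]
    exact ENNReal.add_ne_top.2 ⟨ENNReal.mul_ne_top ENNReal.ofReal_ne_top hΩfin,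
      ENNReal.ofReal_ne_top⟩
  refine ⟨max 1 (B / volume Ω), (max_lt ENNReal.one_lt_top
    (ENNReal.div_lt_top hBfin hΩpos.ne')).ne, ?_⟩
  intro ε hε hεq
  set p := q - ε with hp
  have hp1 : 1 ≤ p := by rw [hp]; linarith
  have hp0 : 0 < p := by linarith
  -- the key estimate
  have key : ENNReal.ofReal ε * ∫⁻ x in Ω, ENNReal.ofReal |f x| ^ p ≤ B := by
    set S : ℕ → Set (EuclideanSpace ℝ (Fin n)) :=
      fun k => {x | x ∈ Ω ∧ (2:ℝ)^k < |f x|} with hS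
    set T : ℕ → Set (EuclideanSpace ℝ (Fin n)) :=
      fun k => toMeasurable volume (S k) with hT
    have hTm : ∀ k, MeasurableSet (T k) := fun k => measurableSet_toMeasurable _ _
    set c : ℕ → ℝ≥0∞ := fun k => ENNReal.ofReal (((2:ℝ)^(k+1)) ^ p) with hc
    -- pointwise bound on Ω
    have hpt : ∀ x ∈ Ω, ENNReal.ofReal |f x| ^ p ≤
        1 + ∑' k, (T k).indicator (fun _ => c k) x := by
      intro x hx
      rcases le_or_gt |f x| 1 with h1 | h1
      · have h2 : ENNReal.ofReal |f x| ^ p ≤ 1 :=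
          ENNReal.rpow_le_one (ENNReal.ofReal_le_one.2 h1) hp0.le
        exact h2.trans le_self_add
      · obtain ⟨k, hk1, hk2⟩ := stmt4_dyadic _ h1
        have hxT : x ∈ T k := subset_toMeasurable _ _ ⟨hx, hk1⟩
        have h2 : ENNReal.ofReal |f x| ^ p ≤ c k := by
          rw [hc, ENNReal.ofReal_rpow_of_nonneg (abs_nonneg _) hp0.le]
          exact ENNReal.ofReal_le_ofReal (Real.rpow_le_rpow (abs_nonneg _) hk2 hp0.le)
        calc ENNReal.ofReal |f x| ^ p ≤ c k := h2
          _ = (T k).indicator (fun _ => c k) x := (Set.indicator_of_mem hxT (fun _ => c k)).symm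
          _ ≤ ∑' j, (T j).indicator (fun _ => c j) x := ENNReal.le_tsum k
          _ ≤ 1 + ∑' j, (T j).indicator (fun _ => c j) x := le_add_self
    -- integrate
    have hint : ∫⁻ x in Ω, ENNReal.ofReal |f x| ^ p ≤
        volume Ω + ∑' k, c k * volume (S k) := by
      calc ∫⁻ x in Ω, ENNReal.ofReal |f x| ^ p
          ≤ ∫⁻ x in Ω, (1 + ∑' k, (T k).indicator (fun _ => c k) x) := by
            apply setLIntegral_mono
              (measurable_const.add (Measurable.ennreal_tsum
                fun k => measurable_const.indicator (hTm k)))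
            exact hpt
        _ = volume Ω + ∑' k, c k * volume (T k ∩ Ω) := by
            rw [lintegral_add_left measurable_const, setLIntegral_one,
              lintegral_tsum (fun k => (measurable_const.indicator (hTm k)).aemeasurable)]
            congr 1
            exact tsum_congr fun k => by
              rw [lintegral_indicator_const (hTm k), Measure.restrict_apply (hTm k)]
        _ ≤ volume Ω + ∑' k, c k * volume (S k) := by
            refine add_le_add_right (ENNReal.tsum_le_tsum fun k => ?_) _
            exact mul_le_mul_right
              ((measure_mono Set.inter_subset_left).trans_eq (measure_toMeasurable _)) _
    -- bound each layer
    have hSk : ∀ k : ℕ, volume (S k) ≤ ENNReal.ofReal (C / ((2:ℝ)^k) ^ q) := by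
      intro k
      have hfin : volume (S k) ≠ ⊤ :=
        ((measure_mono (fun x hx => hx.1)).trans_lt hΩb.measure_lt_top).ne
      have h := hweak ((2:ℝ)^k) (by positivity)
      rw [← ENNReal.ofReal_toReal hfin]
      exact ENNReal.ofReal_le_ofReal h
    have hterm : ∀ k : ℕ, c k * volume (S k) ≤
        ENNReal.ofReal (C * 2^p) * ENNReal.ofReal ((2:ℝ)^(-ε)) ^ k := by
      intro k
      have h2 : (0:ℝ) < 2 := two_pos
      calc c k * volume (S k) ≤ c k * ENNReal.ofReal (C / ((2:ℝ)^k) ^ q) := by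
            gcongr
            exact hSk k
        _ = ENNReal.ofReal (((2:ℝ)^(k+1))^p * (C / ((2:ℝ)^k)^q)) := by
            rw [hc, ← ENNReal.ofReal_mul (by positivity)]
        _ = ENNReal.ofReal (C * 2^p * ((2:ℝ)^(-ε))^k) := by
            congr 1
            rw [← Real.rpow_natCast (2:ℝ) (k+1), ← Real.rpow_natCast (2:ℝ) k,
              ← Real.rpow_natCast ((2:ℝ)^(-ε)) k, ← Real.rpow_mul h2.le,
              ← Real.rpow_mul h2.le, ← Real.rpow_mul h2.le]
            push_cast
            rw [show ((k:ℝ)+1)*p = (k:ℝ)*q + (p + (-ε)*(k:ℝ)) by rw [hp]; ring,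
              Real.rpow_add h2, Real.rpow_add h2]
            have hne : (2:ℝ) ^ ((k:ℝ)*q) ≠ 0 := (Real.rpow_pos_of_pos h2 _).ne'
            field_simp
        _ = ENNReal.ofReal (C * 2^p) * ENNReal.ofReal ((2:ℝ)^(-ε)) ^ k := by
            rw [ENNReal.ofReal_mul (mul_nonneg hC (by positivity)),
              ENNReal.ofReal_pow (by positivity)]
    -- sum the geometric series
    have hr1 : (2:ℝ)^(-ε) < 1 :=
      Real.rpow_lt_one_of_one_lt_of_neg (by norm_num) (by linarith)
    have hr0 : (0:ℝ) < (2:ℝ)^(-ε) := Real.rpow_pos_of_pos two_pos _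
    have hsum : ∑' k, c k * volume (S k) ≤
        ENNReal.ofReal ((C * 2^p) / (1 - (2:ℝ)^(-ε))) := by
      calc ∑' k, c k * volume (S k)
          ≤ ∑' k, ENNReal.ofReal (C * 2^p) * ENNReal.ofReal ((2:ℝ)^(-ε)) ^ k :=
            ENNReal.tsum_le_tsum hterm
        _ = ENNReal.ofReal (C * 2^p) * (1 - ENNReal.ofReal ((2:ℝ)^(-ε)))⁻¹ := by
            rw [ENNReal.tsum_mul_left, ENNReal.tsum_geometric]
        _ = ENNReal.ofReal ((C * 2^p) / (1 - (2:ℝ)^(-ε))) := by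
            rw [ENNReal.ofReal_div_of_pos (by linarith), div_eq_mul_inv]
            congr 2
            rw [ENNReal.ofReal_sub 1 hr0.le, ENNReal.ofReal_one]
    -- real arithmetic for the final bound
    have hl2 : 0 < Real.log 2 := Real.log_pos (by norm_num)
    have hineq : ε * ((C * 2^p) / (1 - (2:ℝ)^(-ε))) ≤ K := by
      have h1 : ε / (1 - (2:ℝ)^(-ε)) ≤ (1 + q * Real.log 2) / Real.log 2 :=
        (div_le_div_iff₀ (by linarith) hl2).2 (stmt4_real_ineq q ε hε hεq)
      have h2 : C * (2:ℝ)^p ≤ C * (2:ℝ)^q :=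
        mul_le_mul_of_nonneg_left
          (Real.rpow_le_rpow_of_exponent_le one_le_two (by rw [hp]; linarith)) hC
      have h3 : (C * (2:ℝ)^p) * (ε / (1 - (2:ℝ)^(-ε))) ≤
          (C * (2:ℝ)^q) * ((1 + q * Real.log 2) / Real.log 2) :=
        mul_le_mul h2 h1 (div_nonneg hε.le (by linarith)) (mul_nonneg hC (by positivity))
      calc ε * ((C * 2^p) / (1 - (2:ℝ)^(-ε)))
          = (C * (2:ℝ)^p) * (ε / (1 - (2:ℝ)^(-ε))) := by ring
        _ ≤ (C * (2:ℝ)^q) * ((1 + q * Real.log 2) / Real.log 2) := h3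
        _ = K := by rw [hKdef]
    -- combine everything
    calc ENNReal.ofReal ε * ∫⁻ x in Ω, ENNReal.ofReal |f x| ^ p
        ≤ ENNReal.ofReal ε * (volume Ω + ENNReal.ofReal ((C * 2^p) / (1 - (2:ℝ)^(-ε)))) := by
          gcongr
          exact hint.trans (by gcongr)
      _ = ENNReal.ofReal ε * volume Ω +
          ENNReal.ofReal ε * ENNReal.ofReal ((C * 2^p) / (1 - (2:ℝ)^(-ε))) := by
          rw [mul_add]
      _ ≤ ENNReal.ofReal q * volume Ω + ENNReal.ofReal K := by
          gcongr
          · linarith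
          · rw [← ENNReal.ofReal_mul hε.le]
            exact ENNReal.ofReal_le_ofReal hineq
      _ = B := hBdef.symm
  -- conclude
  have hA : ENNReal.ofReal ε / volume Ω * ∫⁻ x in Ω, ENNReal.ofReal |f x| ^ p ≤
      B / volume Ω := by
    rw [div_eq_mul_inv, mul_right_comm, ← div_eq_mul_inv]
    exact ENNReal.div_le_div_right key _
  have hAM : ENNReal.ofReal ε / volume Ω * ∫⁻ x in Ω, ENNReal.ofReal |f x| ^ p ≤
      max 1 (B / volume Ω) := hA.trans (le_max_right _ _)
  calc (ENNReal.ofReal ε / volume Ω * ∫⁻ x in Ω, ENNReal.ofReal |f x| ^ p) ^ (1/p)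
      ≤ (max 1 (B / volume Ω)) ^ (1/p) := ENNReal.rpow_le_rpow hAM (by positivity)
    _ ≤ (max 1 (B / volume Ω)) ^ (1:ℝ) :=
        ENNReal.rpow_le_rpow_of_exponent_le (le_max_left _ _) ((div_le_one hp0).2 hp1)
    _ = max 1 (B / volume Ω) := ENNReal.rpow_one _
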